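/- Consider the Y-system map G acting on Λ-periodic data: given (u_{i,j})_{i,j∈ℤ} periodic with respect to a finite-index sublattice and σ ∈ {0,1}, set u'_{i,j} = u_{i,j}^{-1} if i+j ≢ σ (mod 2) and u'_{i,j} = u_{i,j}·(1+u_{i,j-1})(1+u_{i,j+1})/((1+u_{i-1,j}^{-1})(1+u_{i+1,j}^{-1})) if i+j ≡ σ (mod 2). Then the product ρ of the distinct entries (over a fundamental domain of the periodicity lattice) is conserved: ρ(u', 1-σ) = ρ(u, σ). -/
import Mathlib


open scoped BigOperators

lemma devron_shift_prod (Λ' : AddSubgroup (ℤ × ℤ)) (D : Finset (ℤ × ℤ))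
    (hD : ∀ v : ℤ × ℤ, ∃! d : ℤ × ℤ, d ∈ D ∧ v - d ∈ Λ')
    (F : ℤ × ℤ → ℂ) (hF : ∀ v w, w ∈ Λ' → F (v + w) = F v) (e : ℤ × ℤ) :
    ∏ p ∈ D, F (p + e) = ∏ p ∈ D, F p := by
  classical
  choose r hr using hD
  have hrep : ∀ v, F (r v) = F v := by
    intro v
    have := (hF (r v) (v - r v) (hr v).1.2).symm
    simpa using this
  refine Finset.prod_nbij' (fun p => r (p + e)) (fun p => r (p - e)) ?_ ?_ ?_ ?_ ?_
  · intro a _; exact (hr (a + e)).1.1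
  · intro a _; exact (hr (a - e)).1.1
  · intro a ha
    refine ((hr (r (a + e) - e)).2 a ⟨ha, ?_⟩).symm
    have h1 : a + e - r (a + e) ∈ Λ' := (hr (a + e)).1.2
    have : r (a + e) - e - a = -(a + e - r (a + e)) := by ring
    rw [this]; exact neg_mem h1
  · intro a ha
    refine ((hr (r (a - e) + e)).2 a ⟨ha, ?_⟩).symm
    have h1 : a - e - r (a - e) ∈ Λ' := (hr (a - e)).1.2
    have : r (a - e) + e - a = -(a - e - r (a - e)) := by ring
    rw [this]; exact neg_mem h1
  · intro a _; exact (hrep (a + e)).symm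

/-- The product `ρ` of the entries of `u` over a fundamental domain of the periodicity
lattice is conserved by the `Y`-system map `G`. -/
theorem devron_stmt_12
    (Λ' : AddSubgroup (ℤ × ℤ)) (hfin : Λ'.FiniteIndex)
    (hpar : ∀ v ∈ Λ', Even (v.1 + v.2))
    (D : Finset (ℤ × ℤ))
    (hD : ∀ v : ℤ × ℤ, ∃! d : ℤ × ℤ, d ∈ D ∧ v - d ∈ Λ')
    (u : ℤ → ℤ → ℂ)
    (hper : ∀ (i j : ℤ) (v : ℤ × ℤ), v ∈ Λ' → u (i + v.1) (j + v.2) = u i j)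
    (hne0 : ∀ i j, u i j ≠ 0) (hne1 : ∀ i j, u i j ≠ -1)
    (σ : ℤ)
    (u' : ℤ → ℤ → ℂ)
    (hu' : ∀ i j : ℤ,
      u' i j = if (i + j) % 2 = σ % 2 then
          u i j * ((1 + u i (j - 1)) * (1 + u i (j + 1))) /
            ((1 + (u (i - 1) j)⁻¹) * (1 + (u (i + 1) j)⁻¹))
        else (u i j)⁻¹) :
    ∏ p ∈ D, u' p.1 p.2 = ∏ p ∈ D, u p.1 p.2 := by
  classical
  set P : ℤ × ℤ → Prop := fun p => (p.1 + p.2) % 2 = σ % 2 with hPdef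
  have huper : ∀ (v w : ℤ × ℤ), w ∈ Λ' → u (v + w).1 (v + w).2 = u v.1 v.2 := by
    intro v w hw
    simpa using hper v.1 v.2 w hw
  have hPper : ∀ (v w : ℤ × ℤ), w ∈ Λ' → (P (v + w) ↔ P v) := by
    intro v w hw
    obtain ⟨k, hk⟩ := hpar w hw
    simp only [hPdef, Prod.fst_add, Prod.snd_add]
    omega
  -- the key shifted-product lemma
  have keylem : ∀ (g : ℤ × ℤ → ℂ), (∀ v w, w ∈ Λ' → g (v + w) = g v) →
      ∀ e : ℤ × ℤ, (e.1 + e.2) % 2 ≠ 0 →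
      ∏ p ∈ D.filter P, g (p + e) = ∏ p ∈ D.filter (fun p => ¬ P p), g p := by
    intro g hg e he
    have hflip : ∀ p : ℤ × ℤ, P (p + e) ↔ ¬ P p := by
      intro p
      simp only [hPdef, Prod.fst_add, Prod.snd_add]
      omega
    rw [Finset.prod_filter, Finset.prod_filter]
    have step : ∀ p ∈ D, (if P p then g (p + e) else 1) =
        (fun q => if P q then 1 else g q) (p + e) := by
      intro p _
      show (if P p then g (p + e) else 1) = (if P (p + e) then 1 else g (p + e))
      by_cases h : P p
      · rw [if_pos h, if_neg (fun hh => (hflip p).mp hh h)]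
      · rw [if_neg h, if_pos ((hflip p).mpr h)]
    have hF' : ∀ v w, w ∈ Λ' → (fun q => if P q then (1 : ℂ) else g q) (v + w) =
        (fun q => if P q then (1 : ℂ) else g q) v := by
      intro v w hw
      show (if P (v + w) then (1 : ℂ) else g (v + w)) = (if P v then (1 : ℂ) else g v)
      by_cases h : P v
      · rw [if_pos h, if_pos ((hPper v w hw).mpr h)]
      · rw [if_neg h, if_neg (fun hh => h ((hPper v w hw).mp hh)), hg v w hw]
    calc ∏ p ∈ D, (if P p then g (p + e) else 1)
        = ∏ p ∈ D, (fun q => if P q then (1 : ℂ) else g q) (p + e) :=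
          Finset.prod_congr rfl step
      _ = ∏ p ∈ D, (fun q => if P q then (1 : ℂ) else g q) p :=
          devron_shift_prod Λ' D hD (fun q => if P q then (1 : ℂ) else g q) hF' e
      _ = ∏ p ∈ D, (if ¬ P p then g p else 1) := by
          refine Finset.prod_congr rfl (fun p _ => ?_)
          by_cases h : P p <;> simp [h]
  set S := D.filter P with hSdef
  set T := D.filter (fun p => ¬ P p) with hTdef
  have hGper : ∀ (v w : ℤ × ℤ), w ∈ Λ' → (1 + u (v + w).1 (v + w).2) = 1 + u v.1 v.2 := by
    intro v w hw; rw [huper v w hw]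
  have hHper : ∀ (v w : ℤ × ℤ), w ∈ Λ' → (1 + (u (v + w).1 (v + w).2)⁻¹) = 1 + (u v.1 v.2)⁻¹ := by
    intro v w hw; rw [huper v w hw]
  -- the four shifted products
  have hA1 : ∏ p ∈ S, (1 + u p.1 (p.2 - 1)) = ∏ p ∈ T, (1 + u p.1 p.2) := by
    rw [← keylem (fun q => 1 + u q.1 q.2) hGper (0, -1) (by norm_num)]
    exact Finset.prod_congr rfl (fun p _ => by simp [sub_eq_add_neg])
  have hA2 : ∏ p ∈ S, (1 + u p.1 (p.2 + 1)) = ∏ p ∈ T, (1 + u p.1 p.2) := by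
    rw [← keylem (fun q => 1 + u q.1 q.2) hGper (0, 1) (by norm_num)]
    exact Finset.prod_congr rfl (fun p _ => by simp)
  have hB1 : ∏ p ∈ S, (1 + (u (p.1 - 1) p.2)⁻¹) = ∏ p ∈ T, (1 + (u p.1 p.2)⁻¹) := by
    rw [← keylem (fun q => 1 + (u q.1 q.2)⁻¹) hHper (-1, 0) (by norm_num)]
    exact Finset.prod_congr rfl (fun p _ => by simp [sub_eq_add_neg])
  have hB2 : ∏ p ∈ S, (1 + (u (p.1 + 1) p.2)⁻¹) = ∏ p ∈ T, (1 + (u p.1 p.2)⁻¹) := by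
    rw [← keylem (fun q => 1 + (u q.1 q.2)⁻¹) hHper (1, 0) (by norm_num)]
    exact Finset.prod_congr rfl (fun p _ => by simp)
  -- abbreviations
  set a := ∏ p ∈ S, u p.1 p.2 with ha
  set b := ∏ p ∈ T, u p.1 p.2 with hb
  set c := ∏ p ∈ T, (1 + u p.1 p.2) with hc
  set d := ∏ p ∈ T, (1 + (u p.1 p.2)⁻¹) with hd
  have hbne : b ≠ 0 := Finset.prod_ne_zero_iff.mpr (fun p _ => hne0 p.1 p.2)
  have hHne : ∀ i j : ℤ, (1 + (u i j)⁻¹) ≠ 0 := by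
    intro i j h
    apply hne1 i j
    have h0 := hne0 i j
    field_simp at h
    linear_combination h
  have hdne : d ≠ 0 := Finset.prod_ne_zero_iff.mpr (fun p _ => hHne p.1 p.2)
  have hcbd : c = b * d := by
    rw [hc, hb, hd, ← Finset.prod_mul_distrib]
    refine Finset.prod_congr rfl (fun p _ => ?_)
    rw [mul_add, mul_one, mul_inv_cancel₀ (hne0 p.1 p.2), add_comm]
  -- split the product over D
  have hsplit : ∀ f : ℤ × ℤ → ℂ, ∏ p ∈ D, f p = (∏ p ∈ S, f p) * ∏ p ∈ T, f p := by
    intro f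
    rw [hSdef, hTdef, Finset.prod_filter_mul_prod_filter_not]
  rw [hsplit (fun p => u' p.1 p.2), hsplit (fun p => u p.1 p.2)]
  have hprodS : ∏ p ∈ S, u' p.1 p.2 = a * (c * c) / (d * d) := by
    have : ∏ p ∈ S, u' p.1 p.2 = ∏ p ∈ S,
        (u p.1 p.2 * ((1 + u p.1 (p.2 - 1)) * (1 + u p.1 (p.2 + 1))) /
          ((1 + (u (p.1 - 1) p.2)⁻¹) * (1 + (u (p.1 + 1) p.2)⁻¹))) := by
      refine Finset.prod_congr rfl (fun p hp => ?_)
      have hPp : P p := (Finset.mem_filter.mp hp).2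
      rw [hu' p.1 p.2, if_pos hPp]
    rw [this, Finset.prod_div_distrib, Finset.prod_mul_distrib, Finset.prod_mul_distrib,
      Finset.prod_mul_distrib, hA1, hA2, hB1, hB2]
  have hprodT : ∏ p ∈ T, u' p.1 p.2 = b⁻¹ := by
    have : ∏ p ∈ T, u' p.1 p.2 = ∏ p ∈ T, (u p.1 p.2)⁻¹ := by
      refine Finset.prod_congr rfl (fun p hp => ?_)
      have hPp : ¬ P p := (Finset.mem_filter.mp hp).2
      rw [hu' p.1 p.2, if_neg hPp]
    rw [this, ← Finset.prod_inv_distrib]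
  rw [hprodS, hprodT, hcbd]
  field_simp
  ring
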